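/- Let f: ℝ → ℂ be continuous and integrable, and let f_i, f_j be nonzero real constants with f_i f_j > 0. Then lim_{ε→0⁺} ∫_{-∞}^∞ ∫_{-∞}^∞ f(s₀ - t₀) / ((t₀ + iε f_j)(s₀ + iε f_i)) dt₀ ds₀ = 0, i.e. when the iε shifts of the two real poles have the same sign, the iterated contour integral over t₀ (at fixed v = s₀ - t₀) vanishes. -/

import Mathlib

open MeasureTheory Filter Topology

namespace Stmt7Aux

open Complex

lemma integrable_inv_sq_add {c : ℝ} (hc : c ≠ 0) :
    Integrable fun t : ℝ => (t ^ 2 + c ^ 2)⁻¹ := by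
  have h := (integrable_inv_one_add_sq.comp_mul_left' (R := c⁻¹) (inv_ne_zero hc)).const_mul
    ((c : ℝ) ^ 2)⁻¹
  have heq : (fun x : ℝ => ((c : ℝ) ^ 2)⁻¹ * (1 + (c⁻¹ * x) ^ 2)⁻¹)
      = fun t : ℝ => (t ^ 2 + c ^ 2)⁻¹ := by
    funext x
    rw [← mul_inv]
    congr 1
    field_simp
    ring
  rwa [heq] at h

lemma im_ne_zero_add {a : ℂ} (ha : a.im ≠ 0) (t : ℝ) : (t : ℂ) + a ≠ 0 := by
  intro h
  apply ha
  have := congrArg Complex.im h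
  simpa using this

lemma norm_inv_sq (a : ℂ) (t : ℝ) :
    ‖((t : ℂ) + a)⁻¹‖ ^ 2 = ((t + a.re) ^ 2 + a.im ^ 2)⁻¹ := by
  rw [norm_inv, inv_pow]
  congr 1
  rw [Complex.sq_norm, Complex.normSq_apply]
  simp
  ring

lemma continuous_ker {a : ℂ} (ha : a.im ≠ 0) :
    Continuous fun t : ℝ => ((t : ℂ) + a)⁻¹ := by
  refine Continuous.inv₀ (by continuity) fun t => im_ne_zero_add ha t

lemma memL2_ker {a : ℂ} (ha : a.im ≠ 0) :
    MemLp (fun t : ℝ => ((t : ℂ) + a)⁻¹) 2 (volume : Measure ℝ) := by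
  rw [memLp_two_iff_integrable_sq_norm (continuous_ker ha).aestronglyMeasurable]
  have h := (integrable_inv_sq_add ha).comp_add_right a.re
  exact h.congr (ae_of_all _ fun t => (norm_inv_sq a t).symm)

lemma one_div_holder : (1 : ENNReal) / 1 = 1 / 2 + 1 / 2 := by
  rw [ENNReal.div_add_div_same, one_add_one_eq_two,
    ENNReal.div_self two_ne_zero ENNReal.ofNat_ne_top, div_one]

lemma integrable_ker_mul {a b : ℂ} (ha : a.im ≠ 0) (hb : b.im ≠ 0) :
    Integrable (fun t : ℝ => ((t : ℂ) + a)⁻¹ * ((t : ℂ) + b)⁻¹) (volume : Measure ℝ) := by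
  have h := (memL2_ker hb).smul (memL2_ker ha) (r := 1)
  rw [memLp_one_iff_integrable] at h
  exact h.congr (ae_of_all _ fun t => by simp [smul_eq_mul])

lemma ratio_tendsto (a b : ℂ) (hb : b.im ≠ 0) :
    Tendsto (fun R : ℝ => ((R : ℂ) + a) / ((R : ℂ) + b)) atTop (𝓝 1) := by
  have habs : Tendsto (fun R : ℝ => ‖(R : ℂ) + b‖) atTop atTop := by
    refine tendsto_atTop_mono (fun R => ?_)
      (tendsto_atTop_add_const_right _ (-‖b‖) tendsto_id)
    have h1 : ‖(R : ℂ)‖ ≤ ‖(R : ℂ) + b‖ + ‖b‖ := by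
      calc ‖(R : ℂ)‖ = ‖((R : ℂ) + b) - b‖ := by ring_nf
        _ ≤ _ := norm_sub_le _ _
    have h2 : (R : ℝ) ≤ ‖(R : ℂ)‖ := by simpa using le_abs_self R
    simp only [id_eq]
    linarith
  have hz : Tendsto (fun R : ℝ => (a - b) / ((R : ℂ) + b)) atTop (𝓝 0) := by
    rw [tendsto_zero_iff_norm_tendsto_zero]
    simp only [norm_div]
    exact tendsto_const_nhds.div_atTop habs
  have h := tendsto_const_nhds (x := (1 : ℂ)) (f := atTop (α := ℝ)) |>.add hz
  rw [add_zero] at h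
  refine h.congr fun R => ?_
  have hRb : (R : ℂ) + b ≠ 0 := im_ne_zero_add hb R
  field_simp
  ring

lemma tendsto_arg_atTop (c : ℂ) :
    Tendsto (fun R : ℝ => ((R : ℂ) + c).arg) atTop (𝓝 0) := by
  have hinv : Tendsto (fun R : ℝ => ((R⁻¹ : ℝ) : ℂ)) atTop (𝓝 0) := by
    have h := (Complex.continuous_ofReal.tendsto 0).comp (tendsto_inv_atTop_zero)
    simp only [Function.comp_def, Complex.ofReal_zero] at h
    exact h
  have h1 : Tendsto (fun R : ℝ => 1 + c * ((R⁻¹ : ℝ) : ℂ)) atTop (𝓝 1) := by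
    have := (tendsto_const_nhds (x := (1 : ℂ)) (f := atTop (α := ℝ))).add
      ((tendsto_const_nhds (x := c) (f := atTop (α := ℝ))).mul hinv)
    simpa using this
  have h2 : Tendsto (fun R : ℝ => (1 + c * ((R⁻¹ : ℝ) : ℂ)).arg) atTop (𝓝 (Complex.arg 1)) :=
    (Complex.continuousAt_arg Complex.one_mem_slitPlane).tendsto.comp h1
  rw [Complex.arg_one] at h2
  refine h2.congr' ?_
  filter_upwards [eventually_gt_atTop (0 : ℝ)] with R hR
  rw [← Complex.arg_real_mul (1 + c * ((R⁻¹ : ℝ) : ℂ)) hR]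
  congr 1
  have hR0 : (R : ℂ) ≠ 0 := by exact_mod_cast hR.ne'
  push_cast
  field_simp
  try ring

lemma tendsto_arg_atBot (c : ℂ) (hc : 0 < c.im) :
    Tendsto (fun R : ℝ => (-(R : ℂ) + c).arg) atTop (𝓝 Real.pi) := by
  have key : ∀ R : ℝ, (-(R : ℂ) + c).arg
      = Real.pi - ((R : ℂ) + -((starRingEnd ℂ) c)).arg := by
    intro R
    set z : ℂ := (R : ℂ) + -((starRingEnd ℂ) c) with hz
    have hzim : 0 < z.im := by
      simp [hz]
      exact hc
    have h1 : -(R : ℂ) + c = (starRingEnd ℂ) (-z) := by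
      simp [hz, map_add, map_neg, Complex.conj_ofReal]
      ring
    rw [h1, Complex.arg_conj]
    have harg : (-z).arg = z.arg - Real.pi := Complex.arg_neg_eq_arg_sub_pi_of_im_pos hzim
    rw [harg, if_neg, neg_sub]
    have hle : z.arg ≤ Real.pi := Complex.arg_le_pi z
    have hpi : 0 < Real.pi := Real.pi_pos
    intro hcontra
    linarith
  have h := tendsto_arg_atTop (-((starRingEnd ℂ) c))
  have h2 : Tendsto (fun R : ℝ => Real.pi - ((R : ℂ) + -((starRingEnd ℂ) c)).arg) atTop
      (𝓝 (Real.pi - 0)) := tendsto_const_nhds.sub h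
  rw [sub_zero] at h2
  exact h2.congr fun R => (key R).symm

lemma logdiff_aux {u v : ℝ → ℝ} {l : Filter ℝ} {x y : ℝ}
    (hu : Tendsto u l (𝓝 x)) (hv : Tendsto v l (𝓝 y)) :
    Tendsto (fun R => ((u R : ℂ) + (v R : ℂ) * Complex.I)) l
      (𝓝 ((x : ℂ) + (y : ℂ) * Complex.I)) := by
  exact ((Complex.continuous_ofReal.tendsto x).comp hu).add
    (((Complex.continuous_ofReal.tendsto y).comp hv).mul_const Complex.I)

lemma log_sub_log (w₁ w₂ : ℂ) :
    Complex.log w₁ - Complex.log w₂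
      = ((Real.log ‖w₁‖ - Real.log ‖w₂‖ : ℝ) : ℂ)
        + ((w₁.arg - w₂.arg : ℝ) : ℂ) * Complex.I := by
  apply Complex.ext <;>
    simp [Complex.log_re, Complex.log_im, Complex.sub_re, Complex.sub_im]

lemma logdiff_top (a b : ℂ) (ha : a.im ≠ 0) (hb : b.im ≠ 0) :
    Tendsto (fun R : ℝ => Complex.log ((R : ℂ) + a) - Complex.log ((R : ℂ) + b))
      atTop (𝓝 0) := by
  have hre : Tendsto
      (fun R : ℝ => Real.log ‖(R : ℂ) + a‖ - Real.log ‖(R : ℂ) + b‖)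
      atTop (𝓝 0) := by
    have habs : Tendsto (fun R : ℝ => ‖((R : ℂ) + a) / ((R : ℂ) + b)‖) atTop
        (𝓝 1) := by
      have h := (continuous_norm.tendsto (1 : ℂ)).comp (ratio_tendsto a b hb)
      simp only [Function.comp_def, norm_one] at h
      exact h
    have hlog : Tendsto (fun R : ℝ => Real.log (‖((R : ℂ) + a) / ((R : ℂ) + b)‖))
        atTop (𝓝 0) := by
      have h := (Real.continuousAt_log one_ne_zero).tendsto.comp habs
      simp only [Function.comp_def, Real.log_one] at h
      exact h
    refine hlog.congr fun R => ?_
    rw [norm_div, Real.log_div (norm_ne_zero_iff.mpr (im_ne_zero_add ha R))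
      (norm_ne_zero_iff.mpr (im_ne_zero_add hb R))]
  have him : Tendsto (fun R : ℝ => ((R : ℂ) + a).arg - ((R : ℂ) + b).arg) atTop (𝓝 0) := by
    have := (tendsto_arg_atTop a).sub (tendsto_arg_atTop b)
    simpa using this
  have h := logdiff_aux hre him
  simp only [Complex.ofReal_zero, zero_mul, add_zero] at h
  refine h.congr fun R => ?_
  rw [log_sub_log]

lemma logdiff_bot (a b : ℂ) (ha : 0 < a.im) (hb : 0 < b.im) :
    Tendsto (fun R : ℝ => Complex.log (-(R : ℂ) + a) - Complex.log (-(R : ℂ) + b))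
      atTop (𝓝 0) := by
  have hb' : (-b).im ≠ 0 := by simp [hb.ne']
  have ha' : (-a).im ≠ 0 := by simp [ha.ne']
  have hratio : Tendsto (fun R : ℝ => ((R : ℂ) + -a) / ((R : ℂ) + -b)) atTop (𝓝 1) :=
    ratio_tendsto (-a) (-b) hb'
  have hre : Tendsto
      (fun R : ℝ => Real.log ‖-(R : ℂ) + a‖ - Real.log ‖-(R : ℂ) + b‖)
      atTop (𝓝 0) := by
    have habs : Tendsto (fun R : ℝ => ‖((R : ℂ) + -a) / ((R : ℂ) + -b)‖) atTop
        (𝓝 1) := by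
      have h := (continuous_norm.tendsto (1 : ℂ)).comp hratio
      simp only [Function.comp_def, norm_one] at h
      exact h
    have hlog : Tendsto (fun R : ℝ => Real.log (‖((R : ℂ) + -a) / ((R : ℂ) + -b)‖))
        atTop (𝓝 0) := by
      have h := (Real.continuousAt_log one_ne_zero).tendsto.comp habs
      simp only [Function.comp_def, Real.log_one] at h
      exact h
    refine hlog.congr fun R => ?_
    rw [norm_div, Real.log_div (norm_ne_zero_iff.mpr (im_ne_zero_add ha' R))
      (norm_ne_zero_iff.mpr (im_ne_zero_add hb' R))]
    have e1 : (R : ℂ) + -a = -(-(R : ℂ) + a) := by ring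
    have e2 : (R : ℂ) + -b = -(-(R : ℂ) + b) := by ring
    rw [e1, e2, norm_neg, norm_neg]
  have him : Tendsto (fun R : ℝ => (-(R : ℂ) + a).arg - (-(R : ℂ) + b).arg) atTop (𝓝 0) := by
    have := (tendsto_arg_atBot a ha).sub (tendsto_arg_atBot b hb)
    simpa using this
  have h := logdiff_aux hre him
  simp only [Complex.ofReal_zero, zero_mul, add_zero] at h
  refine h.congr fun R => ?_
  rw [log_sub_log]

lemma integral_ker_zero_core {a b : ℂ} (ha : 0 < a.im) (hb : 0 < b.im) (hab : a ≠ b) :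
    ∫ t : ℝ, ((t : ℂ) + a)⁻¹ * ((t : ℂ) + b)⁻¹ = 0 := by
  have hInt := integrable_ker_mul ha.ne' hb.ne'
  set F : ℝ → ℂ := fun t =>
    (b - a)⁻¹ * (Complex.log ((t : ℂ) + a) - Complex.log ((t : ℂ) + b)) with hF
  have hba : b - a ≠ 0 := sub_ne_zero.mpr (Ne.symm hab)
  have hder : ∀ t : ℝ, HasDerivAt F (((t : ℂ) + a)⁻¹ * ((t : ℂ) + b)⁻¹) t := by
    intro t
    have hta : (t : ℂ) + a ∈ Complex.slitPlane := by
      rw [Complex.mem_slitPlane_iff]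
      right
      simpa using ha.ne'
    have htb : (t : ℂ) + b ∈ Complex.slitPlane := by
      rw [Complex.mem_slitPlane_iff]
      right
      simpa using hb.ne'
    have h1 : HasDerivAt (fun z : ℂ => Complex.log (z + a)) (((t : ℂ) + a)⁻¹) (t : ℂ) := by
      have := (Complex.hasDerivAt_log hta).comp (t : ℂ)
        ((hasDerivAt_id ((t : ℂ))).add_const a)
      simpa [Function.comp_def] using this
    have h2 : HasDerivAt (fun z : ℂ => Complex.log (z + b)) (((t : ℂ) + b)⁻¹) (t : ℂ) := by
      have := (Complex.hasDerivAt_log htb).comp (t : ℂ)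
        ((hasDerivAt_id ((t : ℂ))).add_const b)
      simpa [Function.comp_def] using this
    have h3 := ((h1.comp_ofReal).sub (h2.comp_ofReal)).const_mul ((b - a)⁻¹)
    have heq : (b - a)⁻¹ * (((t : ℂ) + a)⁻¹ - ((t : ℂ) + b)⁻¹)
        = ((t : ℂ) + a)⁻¹ * ((t : ℂ) + b)⁻¹ := by
      have h4 : (t : ℂ) + a ≠ 0 := im_ne_zero_add ha.ne' t
      have h5 : (t : ℂ) + b ≠ 0 := im_ne_zero_add hb.ne' t
      field_simp
      try ring
    rw [heq] at h3
    exact h3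
  have hkey : ∀ R : ℝ, (∫ t in (-R)..R, ((t : ℂ) + a)⁻¹ * ((t : ℂ) + b)⁻¹) = F R - F (-R) :=
    fun R => intervalIntegral.integral_eq_sub_of_hasDerivAt (fun t _ => hder t)
      hInt.intervalIntegrable
  have h1 : Tendsto (fun R : ℝ => ∫ t in (-R)..R, ((t : ℂ) + a)⁻¹ * ((t : ℂ) + b)⁻¹)
      atTop (𝓝 (∫ t : ℝ, ((t : ℂ) + a)⁻¹ * ((t : ℂ) + b)⁻¹)) :=
    intervalIntegral_tendsto_integral hInt tendsto_neg_atTop_atBot tendsto_id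
  have h2 : Tendsto (fun R : ℝ => F R - F (-R)) atTop (𝓝 0) := by
    have hd := ((logdiff_top a b ha.ne' hb.ne').sub (logdiff_bot a b ha hb)).const_mul
      ((b - a)⁻¹)
    simp only [sub_zero, mul_zero] at hd
    refine (by simpa using hd : Tendsto _ atTop (𝓝 (0 : ℂ))).congr fun R => ?_
    simp only [hF]
    push_cast
    ring
  exact tendsto_nhds_unique (h1.congr fun R => hkey R) h2

lemma integral_ker_zero {a b : ℂ} (hprod : 0 < a.im * b.im) (hab : a ≠ b) :
    ∫ t : ℝ, ((t : ℂ) + a)⁻¹ * ((t : ℂ) + b)⁻¹ = 0 := by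
  rcases lt_or_gt_of_ne (fun h : a.im = 0 => by simp [h] at hprod) with hha | hha
  · -- a.im < 0, so b.im < 0
    have hhb : b.im < 0 := by
      by_contra h
      push_neg at h
      nlinarith
    have hcore := integral_ker_zero_core (a := (starRingEnd ℂ) a) (b := (starRingEnd ℂ) b)
      (by simpa using hha) (by simpa using hhb)
      (fun h => hab (by simpa using congrArg (starRingEnd ℂ) h))
    have heq : ∀ t : ℝ, ((t : ℂ) + a)⁻¹ * ((t : ℂ) + b)⁻¹
        = (starRingEnd ℂ) (((t : ℂ) + (starRingEnd ℂ) a)⁻¹ * ((t : ℂ) + (starRingEnd ℂ) b)⁻¹) := by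
      intro t
      simp [map_mul, map_inv₀, map_add, Complex.conj_ofReal, Complex.conj_conj]
    calc ∫ t : ℝ, ((t : ℂ) + a)⁻¹ * ((t : ℂ) + b)⁻¹
        = ∫ t : ℝ, (starRingEnd ℂ)
            (((t : ℂ) + (starRingEnd ℂ) a)⁻¹ * ((t : ℂ) + (starRingEnd ℂ) b)⁻¹) := by
          exact integral_congr_ae (ae_of_all _ heq)
      _ = (starRingEnd ℂ) (∫ t : ℝ,
            ((t : ℂ) + (starRingEnd ℂ) a)⁻¹ * ((t : ℂ) + (starRingEnd ℂ) b)⁻¹) :=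
          integral_conj
      _ = 0 := by rw [hcore, map_zero]
  · -- a.im > 0, so b.im > 0
    have hhb : 0 < b.im := by nlinarith
    exact integral_ker_zero_core hha hhb hab

end Stmt7Aux

open Stmt7Aux

set_option maxHeartbeats 1000000 in
/-- When the `iε` shifts of the two real poles have the same sign (`f_i f_j > 0`),
the iterated integral
`∫∫ f(s₀-t₀)/((t₀ + iε f_j)(s₀ + iε f_i)) dt₀ ds₀`
tends to `0` as `ε → 0⁺`: both poles of the inner `t₀`-integral lie on the same
side of the real axis, so the contour can be closed in the empty half-plane. -/
theorem stmt7 (f : ℝ → ℂ) (hf_cont : Continuous f) (hf_int : Integrable f)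
    (fi fj : ℝ) (hfi : fi ≠ 0) (hfj : fj ≠ 0) (hsign : 0 < fi * fj) :
    Tendsto (fun ε : ℝ =>
        ∫ s₀ : ℝ, ∫ t₀ : ℝ, f (s₀ - t₀) /
          (((t₀ : ℂ) + Complex.I * (ε : ℂ) * (fj : ℂ))
            * ((s₀ : ℂ) + Complex.I * (ε : ℂ) * (fi : ℂ))))
      (nhdsWithin 0 (Set.Ioi 0)) (nhds 0) := by
  have key : ∀ ε : ℝ, ε ∈ Set.Ioi (0 : ℝ) →
      (∫ s₀ : ℝ, ∫ t₀ : ℝ, f (s₀ - t₀) /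
          (((t₀ : ℂ) + Complex.I * (ε : ℂ) * (fj : ℂ))
            * ((s₀ : ℂ) + Complex.I * (ε : ℂ) * (fi : ℂ)))) = 0 := by
    intro ε hε
    rw [Set.mem_Ioi] at hε
    set A : ℂ := Complex.I * (ε : ℂ) * (fj : ℂ) with hA
    set B : ℂ := Complex.I * (ε : ℂ) * (fi : ℂ) with hB
    have hAre : A.re = 0 := by simp [hA]
    have hAim : A.im = ε * fj := by simp [hA]
    have hBre : B.re = 0 := by simp [hB]
    have hBim : B.im = ε * fi := by simp [hB]
    have hAim0 : A.im ≠ 0 := by rw [hAim]; exact mul_ne_zero hε.ne' hfj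
    have hBim0 : B.im ≠ 0 := by rw [hBim]; exact mul_ne_zero hε.ne' hfi
    -- the sheared integrand
    set H : ℝ → ℝ → ℂ := fun s v => f v / (((s : ℂ) - (v : ℂ) + A) * ((s : ℂ) + B)) with hH
    -- step 1 : rewrite inner integral
    have step1 : ∀ s : ℝ,
        (∫ t : ℝ, f (s - t) / (((t : ℂ) + A) * ((s : ℂ) + B))) = ∫ v : ℝ, H s v := by
      intro s
      have hsub := integral_sub_left_eq_self
        (fun t : ℝ => f (s - t) / (((t : ℂ) + A) * ((s : ℂ) + B))) volume s
      rw [← hsub]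
      refine integral_congr_ae (ae_of_all _ fun v => ?_)
      simp only [hH]
      have h1 : s - (s - v) = v := by ring
      rw [h1]
      push_cast
      ring_nf
    -- integrability of uncurry H
    have hsv_ne : ∀ p : ℝ × ℝ, ((p.1 : ℂ) - (p.2 : ℂ) + A) ≠ 0 := by
      intro p h
      apply hAim0
      have := congrArg Complex.im h
      simpa using this
    have hs_ne : ∀ s : ℝ, ((s : ℂ) + B) ≠ 0 := fun s => im_ne_zero_add hBim0 s
    set kA : ℝ → ℝ := fun x => ‖((x : ℂ) + A)⁻¹‖ with hkA
    set kB : ℝ → ℝ := fun x => ‖((x : ℂ) + B)⁻¹‖ with hkB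
    have hkA_cont : Continuous kA := (continuous_ker hAim0).norm
    have hkB_cont : Continuous kB := (continuous_ker hBim0).norm
    have hkA2_int : Integrable (fun x : ℝ => kA x ^ 2) := by
      have h := integrable_inv_sq_add (c := ε * fj) (mul_ne_zero hε.ne' hfj)
      refine h.congr (ae_of_all _ fun x => ?_)
      simp only [hkA]
      rw [norm_inv_sq, hAre, hAim, add_zero]
    have hkB2_int : Integrable (fun x : ℝ => kB x ^ 2) := by
      have h := integrable_inv_sq_add (c := ε * fi) (mul_ne_zero hε.ne' hfi)
      refine h.congr (ae_of_all _ fun x => ?_)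
      simp only [hkB]
      rw [norm_inv_sq, hBre, hBim, add_zero]
    set u : ℝ × ℝ → ℝ := fun p => Real.sqrt ‖f p.2‖ * kA (p.1 - p.2) with hu
    set w : ℝ × ℝ → ℝ := fun p => Real.sqrt ‖f p.2‖ * kB p.1 with hw
    have hu_cont : Continuous u := by
      apply Continuous.mul
      · exact (hf_cont.comp continuous_snd).norm.sqrt
      · exact hkA_cont.comp (continuous_fst.sub continuous_snd)
    have hw_cont : Continuous w := by
      apply Continuous.mul
      · exact (hf_cont.comp continuous_snd).norm.sqrt
      · exact hkB_cont.comp continuous_fst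
    have hu2_int : Integrable (fun p : ℝ × ℝ => u p ^ 2)
        ((volume : Measure ℝ).prod volume) := by
      have h := hf_int.norm.convolution_integrand (ContinuousLinearMap.mul ℝ ℝ) hkA2_int
      refine h.congr (ae_of_all _ fun p => ?_)
      simp only [ContinuousLinearMap.mul_apply', hu]
      rw [mul_pow, Real.sq_sqrt (norm_nonneg _)]
    have hw2_int : Integrable (fun p : ℝ × ℝ => w p ^ 2)
        ((volume : Measure ℝ).prod volume) := by
      have h := hkB2_int.mul_prod hf_int.norm
      refine h.congr (ae_of_all _ fun p => ?_)
      simp only [hw]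
      rw [mul_pow, Real.sq_sqrt (norm_nonneg _)]
      ring
    have hu_L2 : MemLp u 2 ((volume : Measure ℝ).prod volume) :=
      (memLp_two_iff_integrable_sq hu_cont.aestronglyMeasurable).mpr hu2_int
    have hw_L2 : MemLp w 2 ((volume : Measure ℝ).prod volume) :=
      (memLp_two_iff_integrable_sq hw_cont.aestronglyMeasurable).mpr hw2_int
    have huw_int : Integrable (fun p : ℝ × ℝ => u p * w p)
        ((volume : Measure ℝ).prod volume) := by
      have h := hw_L2.smul hu_L2 (r := 1)
      rw [memLp_one_iff_integrable] at h
      exact h.congr (ae_of_all _ fun p => by simp [smul_eq_mul])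
    have hH_cont : Continuous (Function.uncurry H) := by
      simp only [hH, Function.uncurry]
      have c1 : Continuous fun p : ℝ × ℝ => ((p.1 : ℝ) : ℂ) :=
        Complex.continuous_ofReal.comp continuous_fst
      have c2 : Continuous fun p : ℝ × ℝ => ((p.2 : ℝ) : ℂ) :=
        Complex.continuous_ofReal.comp continuous_snd
      exact (hf_cont.comp continuous_snd).div
        (((c1.sub c2).add continuous_const).mul (c1.add continuous_const))
        fun p => mul_ne_zero (hsv_ne p) (hs_ne p.1)
    have hHint : Integrable (Function.uncurry H) ((volume : Measure ℝ).prod volume) := by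
      refine Integrable.mono' huw_int hH_cont.aestronglyMeasurable
        (ae_of_all _ fun p => ?_)
      simp only [Function.uncurry, hH, hu, hw]
      rw [norm_div, norm_mul]
      have hcast : ((p.1 : ℂ) - (p.2 : ℂ) + A) = (((p.1 - p.2 : ℝ) : ℂ) + A) := by push_cast; ring
      rw [hcast]
      have heq : ‖f p.2‖ / (‖(((p.1 - p.2 : ℝ) : ℂ) + A)‖ * ‖((p.1 : ℂ) + B)‖)
          = (Real.sqrt ‖f p.2‖ * kA (p.1 - p.2)) * (Real.sqrt ‖f p.2‖ * kB p.1) := by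
        simp only [hkA, hkB]
        rw [norm_inv, norm_inv, div_eq_mul_inv, mul_inv]
        have : Real.sqrt ‖f p.2‖ * Real.sqrt ‖f p.2‖ = ‖f p.2‖ :=
          Real.mul_self_sqrt (norm_nonneg _)
        calc ‖f p.2‖ * (‖(((p.1 - p.2 : ℝ) : ℂ) + A)‖⁻¹ * ‖((p.1 : ℂ) + B)‖⁻¹)
            = (Real.sqrt ‖f p.2‖ * Real.sqrt ‖f p.2‖)
              * (‖(((p.1 - p.2 : ℝ) : ℂ) + A)‖⁻¹ * ‖((p.1 : ℂ) + B)‖⁻¹) := by rw [this]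
          _ = _ := by ring
      rw [heq]
    -- step 2 : swap and use vanishing of the kernel integral
    have hswap : (∫ s : ℝ, ∫ v : ℝ, H s v) = ∫ v : ℝ, ∫ s : ℝ, H s v :=
      integral_integral_swap hHint
    have hae : ∀ᵐ v : ℝ, (v : ℂ) ≠ A - B := by
      refine ae_iff.mpr (measure_mono_null ?_ (measure_singleton ((A - B).re)))
      intro v hv
      simp only [Set.mem_setOf_eq, not_not] at hv
      simp only [Set.mem_singleton_iff]
      rw [← hv]
      simp
    have hinner : ∀ᵐ v : ℝ, (∫ s : ℝ, H s v) = 0 := by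
      filter_upwards [hae] with v hv
      have hpull : (∫ s : ℝ, H s v)
          = f v * ∫ s : ℝ, ((s : ℂ) + (A - (v : ℂ)))⁻¹ * ((s : ℂ) + B)⁻¹ := by
        rw [← integral_const_mul]
        refine integral_congr_ae (ae_of_all _ fun s => ?_)
        simp only [hH]
        rw [div_eq_mul_inv, mul_inv]
        have h1 : ((s : ℂ) - (v : ℂ) + A) = ((s : ℂ) + (A - (v : ℂ))) := by ring
        rw [h1]
      rw [hpull, integral_ker_zero, mul_zero]
      · rw [Complex.sub_im, Complex.ofReal_im, sub_zero, hAim, hBim]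
        have hrw : ε * fj * (ε * fi) = ε * ε * (fi * fj) := by ring
        rw [hrw]
        exact mul_pos (mul_pos hε hε) hsign
      · intro h
        apply hv
        have : (v : ℂ) = A - B := by linear_combination -h
        exact this
    calc (∫ s₀ : ℝ, ∫ t₀ : ℝ, f (s₀ - t₀) / (((t₀ : ℂ) + A) * ((s₀ : ℂ) + B)))
        = ∫ s : ℝ, ∫ v : ℝ, H s v := by
          refine integral_congr_ae (ae_of_all _ fun s => ?_)
          exact step1 s
      _ = ∫ v : ℝ, ∫ s : ℝ, H s v := hswap
      _ = ∫ v : ℝ, (0 : ℂ) := integral_congr_ae hinner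
      _ = 0 := integral_zero _ _
  have hEq : (fun _ : ℝ => (0 : ℂ)) =ᶠ[nhdsWithin 0 (Set.Ioi 0)]
      (fun ε : ℝ =>
        ∫ s₀ : ℝ, ∫ t₀ : ℝ, f (s₀ - t₀) /
          (((t₀ : ℂ) + Complex.I * (ε : ℂ) * (fj : ℂ))
            * ((s₀ : ℂ) + Complex.I * (ε : ℂ) * (fi : ℂ)))) :=
    eventually_nhdsWithin_of_forall fun ε hε => (key ε hε).symm
  exact Tendsto.congr' hEq tendsto_const_nhds
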